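/- arXiv:math/0312421 — 2 statements merged into one kernel-verified Lean document; each statement's English description precedes it below -/
import Mathlib

section
/- Let S be an endomorphism of ℍ² (quaternionic right vector space) with S² = −Id. Then for each nonzero v ∈ ℍ², the quaternionic line vℍ is S-invariant if and only if Sv = v·q for some quaternion q with q² = −1. Moreover S always has at least one invariant quaternionic line (every 2-sphere in S⁴ = ℍP¹ is nonempty). -/
open Quaternion

/-- Let `S` be an `ℍ`-linear endomorphism of `ℍ²` with `S² = −Id`. Then (1) for `v ≠ 0`
the quaternionic line through `v` is `S`-invariant iff `S v = q • v` for some quaternion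
`q` with `q² = −1`, and (2) there exists at least one `S`-invariant quaternionic line. -/
theorem stmt_15 (S : (Fin 2 → ℍ[ℝ]) →ₗ[ℍ[ℝ]] (Fin 2 → ℍ[ℝ]))
    (hS : S ∘ₗ S = -LinearMap.id) :
    (∀ v : Fin 2 → ℍ[ℝ], v ≠ 0 →
      (Submodule.map S (Submodule.span ℍ[ℝ] {v}) ≤ Submodule.span ℍ[ℝ] {v} ↔
        ∃ q : ℍ[ℝ], S v = q • v ∧ q ^ 2 = -1)) ∧
    ∃ v : Fin 2 → ℍ[ℝ], v ≠ 0 ∧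
      Submodule.map S (Submodule.span ℍ[ℝ] {v}) ≤ Submodule.span ℍ[ℝ] {v} := by
  have hSS : ∀ x : Fin 2 → ℍ[ℝ], S (S x) = -x := fun x => by
    have := LinearMap.congr_fun hS x
    simpa using this
  have main : ∀ v : Fin 2 → ℍ[ℝ], v ≠ 0 →
      (Submodule.map S (Submodule.span ℍ[ℝ] {v}) ≤ Submodule.span ℍ[ℝ] {v} ↔
        ∃ q : ℍ[ℝ], S v = q • v ∧ q ^ 2 = -1) := by
    intro v hv
    constructor
    · intro h
      have hmem : S v ∈ Submodule.span ℍ[ℝ] {v} :=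
        h ⟨v, Submodule.mem_span_singleton_self v, rfl⟩
      obtain ⟨q, hq⟩ := Submodule.mem_span_singleton.mp hmem
      refine ⟨q, hq.symm, ?_⟩
      have h2 : S (S v) = (q * q) • v := by
        rw [← hq, map_smul, ← hq, smul_smul]
      rw [hSS] at h2
      have h3 : (q * q + 1) • v = 0 := by
        rw [add_smul, one_smul, ← h2]; abel
      have hq2 : q * q + 1 = 0 := by
        rcases smul_eq_zero.mp h3 with h' | h'
        · exact h'
        · exact absurd h' hv
      rw [pow_two]
      exact eq_neg_of_add_eq_zero_left hq2
    · rintro ⟨q, hq, -⟩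
      rw [Submodule.map_span, Set.image_singleton, Submodule.span_le]
      intro x hx
      rw [Set.mem_singleton_iff] at hx
      subst hx
      rw [hq]
      exact Submodule.smul_mem _ q (Submodule.mem_span_singleton_self v)
  refine ⟨main, ?_⟩
  set q : ℍ[ℝ] := ⟨0, 1, 0, 0⟩ with hqdef
  have hq2 : q ^ 2 = -1 := by
    rw [pow_two]
    show (⟨0, 1, 0, 0⟩ : ℍ[ℝ]) * ⟨0, 1, 0, 0⟩ = -1
    ext <;> simp [hqdef]
  set e₀ : Fin 2 → ℍ[ℝ] := Pi.single 0 1 with he₀def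
  have he₀ : e₀ ≠ 0 := by
    intro h
    have := congrFun h 0
    simp [he₀def] at this
  by_cases hv : q • e₀ + S e₀ = 0
  · refine ⟨e₀, he₀, (main e₀ he₀).mpr ⟨-q, ?_, by rw [neg_pow_two, hq2]⟩⟩
    have : S e₀ = -(q • e₀) := by
      rw [eq_neg_iff_add_eq_zero, add_comm]; exact hv
    rw [this, neg_smul]
  · refine ⟨q • e₀ + S e₀, hv, (main _ hv).mpr ⟨q, ?_, hq2⟩⟩
    have hqq : q * q = -1 := by rw [← pow_two]; exact hq2
    rw [map_add, map_smul, hSS, smul_add, smul_smul, hqq, neg_one_smul]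
    abel
end

section
/- Holomorphic family kernel semicontinuity: let T : ℂ → Hom(E, F) be an analytic (holomorphic) family of linear maps between finite-dimensional complex vector spaces. Then the set {μ : dim ker T(μ) > k} is either all of ℂ or discrete, where k is the generic (minimal) kernel dimension; equivalently, dim ker T(μ) equals its minimum value for all μ outside a discrete set. -/
/-- Kernel semicontinuity for a holomorphic family of linear maps between
finite-dimensional complex vector spaces: if `k` is the minimal (generic) kernel
dimension, then the set of parameters where the kernel dimension exceeds `k` is
discrete (has no accumulation point). -/
theorem stmt_18 (E F : Type*) [NormedAddCommGroup E] [NormedSpace ℂ E]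
    [FiniteDimensional ℂ E] [NormedAddCommGroup F] [NormedSpace ℂ F]
    [FiniteDimensional ℂ F] (T : ℂ → (E →L[ℂ] F))
    (hT : ∀ μ : ℂ, AnalyticAt ℂ T μ) (k : ℕ)
    (hk : IsLeast {n : ℕ | ∃ μ : ℂ, n = Module.finrank ℂ (LinearMap.ker (T μ : E →ₗ[ℂ] F))} k) :
    ∀ μ₀ : ℂ, ¬ AccPt μ₀
      (Filter.principal {μ : ℂ | k < Module.finrank ℂ (LinearMap.ker (T μ : E →ₗ[ℂ] F))}) := by
  classical
  intro μ₀ hacc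
  obtain ⟨⟨μ₁, hμ₁⟩, hmin⟩ := hk
  set n := Module.finrank ℂ E with hn
  have hkn : k ≤ n := by
    rw [hμ₁]; exact Submodule.finrank_le _
  set r := n - k with hr
  -- complement of the kernel at μ₁
  obtain ⟨W, hW⟩ := Submodule.exists_isCompl (LinearMap.ker (T μ₁ : E →ₗ[ℂ] F))
  have hWr : Module.finrank ℂ W = r := by
    have h1 := Submodule.finrank_add_eq_of_isCompl hW
    rw [← hμ₁] at h1
    omega
  let bW : Module.Basis (Fin r) ℂ W := Module.finBasisOfFinrankEq ℂ W hWr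
  let u : (Fin r → ℂ) →ₗ[ℂ] E := W.subtype ∘ₗ (bW.equivFun.symm : (Fin r → ℂ) →ₗ[ℂ] W)
  have hu_mem : ∀ x, u x ∈ W := fun x => (bW.equivFun.symm x).2
  have hu_inj : Function.Injective (((T μ₁ : E →ₗ[ℂ] F)) ∘ₗ u) := by
    rw [← LinearMap.ker_eq_bot, LinearMap.ker_eq_bot']
    intro x hx
    have hker : u x ∈ LinearMap.ker (T μ₁ : E →ₗ[ℂ] F) := by
      simpa using hx
    have h0 : u x ∈ (⊥ : Submodule ℂ E) := by
      rw [← hW.inf_eq_bot]; exact ⟨hker, hu_mem x⟩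
    have h2 : bW.equivFun.symm x = 0 := Subtype.ext (by simpa [u] using h0)
    exact bW.equivFun.symm.injective (h2.trans (map_zero _).symm)
  -- range at μ₁ and its complement
  set R := LinearMap.range ((T μ₁ : E →ₗ[ℂ] F) ∘ₗ u) with hRdef
  have hRr : Module.finrank ℂ R = r := by
    rw [hRdef, LinearMap.finrank_range_of_inj hu_inj]
    simp
  obtain ⟨R', hR'⟩ := Submodule.exists_isCompl R
  let bR : Module.Basis (Fin r) ℂ R := Module.finBasisOfFinrankEq ℂ R hRr
  let v : F →ₗ[ℂ] (Fin r → ℂ) :=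
    (bR.equivFun : R →ₗ[ℂ] (Fin r → ℂ)) ∘ₗ (R.linearProjOfIsCompl R' hR')
  -- the determinant function
  set g : ℂ → ℂ := fun μ => LinearMap.det (v ∘ₗ (T μ : E →ₗ[ℂ] F) ∘ₗ u) with hg
  -- g μ₁ ≠ 0
  have hcomp_inj : Function.Injective (v ∘ₗ (T μ₁ : E →ₗ[ℂ] F) ∘ₗ u) := by
    intro x y hxy
    apply hu_inj
    have hx : ((T μ₁ : E →ₗ[ℂ] F) ∘ₗ u) x ∈ R := LinearMap.mem_range_self _ x
    have hy : ((T μ₁ : E →ₗ[ℂ] F) ∘ₗ u) y ∈ R := LinearMap.mem_range_self _ y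
    have h1 : ∀ z (hz : ((T μ₁ : E →ₗ[ℂ] F) ∘ₗ u) z ∈ R),
        (v ∘ₗ (T μ₁ : E →ₗ[ℂ] F) ∘ₗ u) z
          = bR.equivFun ⟨((T μ₁ : E →ₗ[ℂ] F) ∘ₗ u) z, hz⟩ := by
      intro z hz
      simp only [v, LinearMap.comp_apply, LinearEquiv.coe_coe]
      exact congrArg bR.equivFun (Submodule.linearProjOfIsCompl_apply_left hR' ⟨_, hz⟩)
    rw [h1 x hx, h1 y hy] at hxy
    have := bR.equivFun.injective hxy
    exact congrArg Subtype.val this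
  have hg1 : g μ₁ ≠ 0 := by
    have : IsUnit (v ∘ₗ (T μ₁ : E →ₗ[ℂ] F) ∘ₗ u) := by
      rw [LinearMap.isUnit_iff_ker_eq_bot, LinearMap.ker_eq_bot]
      exact hcomp_inj
    exact isUnit_iff_ne_zero.1 (LinearMap.isUnit_det _ this)
  -- entries as continuous linear functionals of T μ
  let φ : Fin r → Fin r → ((E →L[ℂ] F) →ₗ[ℂ] ℂ) := fun i j =>
    { toFun := fun S => v (S (u (Pi.single j 1))) i
      map_add' := by intros; simp
      map_smul' := by intros; simp }
  have hφanal : ∀ i j μ, AnalyticAt ℂ (fun μ => φ i j (T μ)) μ := by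
    intro i j μ
    exact ((φ i j).toContinuousLinearMap.analyticAt _).comp (hT μ)
  -- expansion of g as a finite sum of products
  have hgdet : ∀ μ, g μ = ∑ σ : Equiv.Perm (Fin r),
      ((Equiv.Perm.sign σ : ℤ) : ℂ) * ∏ i, φ (σ i) i (T μ) := by
    intro μ
    show LinearMap.det (v ∘ₗ (T μ : E →ₗ[ℂ] F) ∘ₗ u) = _
    rw [← LinearMap.det_toMatrix' (v ∘ₗ (T μ : E →ₗ[ℂ] F) ∘ₗ u), Matrix.det_apply]
    refine Finset.sum_congr rfl fun σ _ => ?_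
    rw [Units.smul_def, zsmul_eq_mul]
    congr 1
  have hganal : ∀ μ, AnalyticAt ℂ g μ := by
    intro μ
    have : AnalyticAt ℂ (fun μ => ∑ σ : Equiv.Perm (Fin r),
        ((Equiv.Perm.sign σ : ℤ) : ℂ) * ∏ i, φ (σ i) i (T μ)) μ := by
      apply Finset.analyticAt_fun_sum
      intro σ _
      exact analyticAt_const.mul
        (Finset.analyticAt_fun_prod _ (fun i _ => hφanal (σ i) i μ))
    exact this.congr (Filter.Eventually.of_forall fun z => (hgdet z).symm)
  -- the bad set is contained in the zero set of g
  have hsub : ∀ μ : ℂ, k < Module.finrank ℂ (LinearMap.ker (T μ : E →ₗ[ℂ] F)) → g μ = 0 := by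
    intro μ hμ
    by_contra hgμ
    -- g μ ≠ 0 ⟹ the composite is injective ⟹ rank T μ ≥ r
    have hinj : Function.Injective (v ∘ₗ (T μ : E →ₗ[ℂ] F) ∘ₗ u) := by
      have := (LinearMap.equivOfDetNeZero _ hgμ).injective
      exact this
    have hinj2 : Function.Injective ((T μ : E →ₗ[ℂ] F) ∘ₗ u) := by
      intro x y hxy
      exact hinj (by simp [LinearMap.comp_apply, hxy])
    have hle : LinearMap.range ((T μ : E →ₗ[ℂ] F) ∘ₗ u) ≤ LinearMap.range (T μ : E →ₗ[ℂ] F) := by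
      rw [LinearMap.range_comp]
      exact LinearMap.map_le_range
    have hrange : r ≤ Module.finrank ℂ (LinearMap.range (T μ : E →ₗ[ℂ] F)) := by
      have h2 : Module.finrank ℂ (LinearMap.range ((T μ : E →ₗ[ℂ] F) ∘ₗ u)) = r := by
        rw [LinearMap.finrank_range_of_inj hinj2]; simp
      rw [← h2]
      exact Submodule.finrank_mono hle
    have hrn : Module.finrank ℂ (LinearMap.range (T μ : E →ₗ[ℂ] F))
        + Module.finrank ℂ (LinearMap.ker (T μ : E →ₗ[ℂ] F)) = n :=
      LinearMap.finrank_range_add_finrank_ker _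
    rw [show LinearMap.ker ((T μ : E →ₗ[ℂ] F)) = LinearMap.ker (T μ : E →ₗ[ℂ] F) from rfl] at hrn
    omega
  -- identity theorem
  have hfreq : ∃ᶠ z in nhdsWithin μ₀ {μ₀}ᶜ, g z = 0 := by
    rw [accPt_iff_frequently] at hacc
    rw [frequently_nhdsWithin_iff]
    refine hacc.mono ?_
    rintro z ⟨hz1, hz2⟩
    exact ⟨hsub z hz2, hz1⟩
  have hall : Set.EqOn g 0 Set.univ :=
    AnalyticOnNhd.eqOn_zero_of_preconnected_of_frequently_eq_zero
      (fun z _ => hganal z) isPreconnected_univ (Set.mem_univ μ₀) hfreq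
  exact hg1 (hall (Set.mem_univ μ₁))
end
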